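/- Let k ≥ 2, let p ∈ ℂ, and let q ∈ ℂ be a primitive k-th root of unity. Then f_k(p,q) = 1 + (−p)^k. -/

import Mathlib

namespace PaperF

open scoped Classical

/-- The number of fixed points `a(w)` of a permutation of `{1, …, k}`. -/
def fixCount {k : ℕ} (w : Equiv.Perm (Fin k)) : ℕ :=
  (Finset.univ.filter fun i => w i = i).card

/-- The number `c(-w)` of neat pairs of `w`: pairs `{i, j}` of distinct indices with
`w i < j` and `w j < i`. -/
def neatCount {k : ℕ} (w : Equiv.Perm (Fin k)) : ℕ :=
  ((Finset.univ ×ˢ Finset.univ).filter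
    fun pr : Fin k × Fin k => pr.1 < pr.2 ∧ w pr.1 < pr.2 ∧ w pr.2 < pr.1).card

/-- `f_k(p, q) = Σ_{w ∈ S_k, w² = 1} (p(1-q))^{(k - a(w))/2} (1-p)^{a(w)} q^{c(-w)}`,
the sum being over the involutions in the symmetric group on `{1, …, k}`. -/
noncomputable def f (k : ℕ) (p q : ℂ) : ℂ :=
  ∑ w ∈ Finset.univ.filter (fun w : Equiv.Perm (Fin k) => w * w = 1),
    (p * (1 - q)) ^ ((k - fixCount w) / 2) * (1 - p) ^ fixCount w * q ^ neatCount w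

/-! ### skip embedding -/

variable {n : ℕ}

/-- Order embedding of `Fin (n+1)` into `Fin (n+3)` skipping `j` and the last element. -/
def emb (j : Fin (n+2)) (i : Fin (n+1)) : Fin (n+3) :=
  if (i : ℕ) < (j : ℕ) then ⟨i, by omega⟩ else ⟨(i : ℕ) + 1, by omega⟩

/-- Retraction of `emb`. -/
def ret (j : Fin (n+2)) (x : Fin (n+3)) : Fin (n+1) :=
  ⟨min (if (x : ℕ) < (j : ℕ) then (x : ℕ) else (x : ℕ) - 1) n, by omega⟩

lemma emb_lt (j : Fin (n+2)) (i : Fin (n+1)) : (emb j i : ℕ) < n + 2 := by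
  unfold emb; split <;> simp only [Fin.val_mk] <;> omega

lemma emb_ne (j : Fin (n+2)) (i : Fin (n+1)) : (emb j i : ℕ) ≠ (j : ℕ) := by
  unfold emb; split <;> simp only [Fin.val_mk] <;> omega

lemma ret_emb (j : Fin (n+2)) (i : Fin (n+1)) : ret j (emb j i) = i := by
  apply Fin.ext
  simp only [emb, ret, apply_ite (Fin.val), Fin.val_mk]
  split_ifs <;> omega

lemma emb_ret (j : Fin (n+2)) (x : Fin (n+3)) (h1 : (x : ℕ) ≠ (j : ℕ))
    (h2 : (x : ℕ) ≠ n + 2) : emb j (ret j x) = x := by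
  apply Fin.ext
  simp only [emb, ret, apply_ite (Fin.val), Fin.val_mk]
  split_ifs <;> simp only [Fin.val_mk] at * <;> omega

lemma emb_lt_emb_iff (j : Fin (n+2)) {a b : Fin (n+1)} : emb j a < emb j b ↔ a < b := by
  unfold emb
  split <;> split <;> simp only [Fin.lt_def, Fin.val_mk] <;> omega

lemma emb_lt_j_iff (j : Fin (n+2)) (i : Fin (n+1)) : (emb j i : ℕ) < (j : ℕ) ↔ (i : ℕ) < (j : ℕ) := by
  unfold emb; split <;> simp only [Fin.val_mk] <;> omega

lemma emb_injective (j : Fin (n+2)) : Function.Injective (emb j) := by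
  intro a b hab
  have := ret_emb j a; rw [hab, ret_emb] at this; exact this.symm


/-! ### the extended permutations -/

/-- The function underlying `wtwo j u`: swap `j` and the top element `n+2`, act by `u`
(conjugated by `emb j`) elsewhere. -/
def gfun (j : Fin (n+2)) (u : Equiv.Perm (Fin (n+1))) (x : Fin (n+3)) : Fin (n+3) :=
  if (x : ℕ) = (j : ℕ) then Fin.last (n+2)
  else if (x : ℕ) = n + 2 then ⟨(j : ℕ), by omega⟩
  else emb j (u (ret j x))

lemma gfun_gfun (j : Fin (n+2)) (u : Equiv.Perm (Fin (n+1))) (x : Fin (n+3)) :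
    gfun j u⁻¹ (gfun j u x) = x := by
  unfold gfun
  rcases eq_or_ne (x : ℕ) (j : ℕ) with h1 | h1
  · rw [if_pos h1, if_neg (by simp [Fin.val_last]; omega), if_pos (Fin.val_last _)]
    exact Fin.ext h1.symm
  · rcases eq_or_ne (x : ℕ) (n + 2) with h2 | h2
    · rw [if_neg h1, if_pos h2, if_pos (by simp), ]
      exact Fin.ext h2.symm
    · rw [if_neg h1, if_neg h2, if_neg (emb_ne j _), if_neg (by have := emb_lt j (u (ret j x)); omega),
        ret_emb, (by simp : u⁻¹ (u (ret j x)) = ret j x), emb_ret j x h1 h2]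

/-- The involution pairing `j` with the top element, acting via `u` elsewhere. -/
def wtwo (j : Fin (n+2)) (u : Equiv.Perm (Fin (n+1))) : Equiv.Perm (Fin (n+3)) :=
  ⟨gfun j u, gfun j u⁻¹, gfun_gfun j u, by
    have := gfun_gfun j u⁻¹
    simpa [Function.RightInverse, Function.LeftInverse] using this⟩

@[simp] lemma wtwo_apply (j : Fin (n+2)) (u : Equiv.Perm (Fin (n+1))) (x : Fin (n+3)) :
    wtwo j u x = gfun j u x := rfl

lemma wtwo_invol (j : Fin (n+2)) {u : Equiv.Perm (Fin (n+1))} (hu : u * u = 1) :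
    wtwo j u * wtwo j u = 1 := by
  have hinv : u⁻¹ = u := inv_eq_of_mul_eq_one_left hu
  apply Equiv.ext
  intro x
  have := gfun_gfun j u x
  rw [hinv] at this
  exact this

/-- retraction of `Fin.castSucc`. -/
def ret1 (x : Fin (n+3)) : Fin (n+2) := ⟨min (x : ℕ) (n+1), by omega⟩

lemma ret1_castSucc (i : Fin (n+2)) : ret1 (Fin.castSucc i) = i := by
  apply Fin.ext; simp [ret1]; omega

lemma castSucc_ret1 (x : Fin (n+3)) (h : (x : ℕ) ≠ n + 2) : Fin.castSucc (ret1 x) = x := by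
  apply Fin.ext; simp [ret1]; omega

/-- The function underlying `wone u`: fix the top element, act by `u` elsewhere. -/
def gmid (u : Equiv.Perm (Fin (n+2))) (x : Fin (n+3)) : Fin (n+3) :=
  if (x : ℕ) = n + 2 then Fin.last (n+2) else Fin.castSucc (u (ret1 x))

lemma gmid_gmid (u : Equiv.Perm (Fin (n+2))) (x : Fin (n+3)) :
    gmid u⁻¹ (gmid u x) = x := by
  unfold gmid
  rcases eq_or_ne (x : ℕ) (n + 2) with h | h
  · rw [if_pos h, if_pos (Fin.val_last _)]
    exact Fin.ext h.symm
  · rw [if_neg h, if_neg (by simp [Fin.castSucc]; omega), ret1_castSucc,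
      (by simp : u⁻¹ (u (ret1 x)) = ret1 x), castSucc_ret1 x h]

/-- The involution fixing the top element, acting via `u` elsewhere. -/
def wone (u : Equiv.Perm (Fin (n+2))) : Equiv.Perm (Fin (n+3)) :=
  ⟨gmid u, gmid u⁻¹, gmid_gmid u, by
    have := gmid_gmid u⁻¹
    simpa [Function.RightInverse, Function.LeftInverse] using this⟩

@[simp] lemma wone_apply (u : Equiv.Perm (Fin (n+2))) (x : Fin (n+3)) :
    wone u x = gmid u x := rfl

lemma wone_invol {u : Equiv.Perm (Fin (n+2))} (hu : u * u = 1) :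
    wone u * wone u = 1 := by
  have hinv : u⁻¹ = u := inv_eq_of_mul_eq_one_left hu
  apply Equiv.ext
  intro x
  have := gmid_gmid u x
  rw [hinv] at this
  exact this


/-! ### counting lemmas -/

open Finset

lemma fixCount_le {k : ℕ} (w : Equiv.Perm (Fin k)) : fixCount w ≤ k := by
  have := Finset.card_filter_le (Finset.univ : Finset (Fin k)) (fun i => w i = i)
  simpa [fixCount] using this

lemma fixCount_wone (u : Equiv.Perm (Fin (n+2))) : fixCount (wone u) = fixCount u + 1 := by
  have hset : (univ.filter fun x : Fin (n+3) => wone u x = x)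
      = insert (Fin.last (n+2)) ((univ.filter fun i : Fin (n+2) => u i = i).image Fin.castSucc) := by
    ext x
    simp only [mem_filter, mem_univ, true_and, mem_insert, mem_image]
    simp only [wone_apply, gmid]
    constructor
    · intro hx
      rcases eq_or_ne (x : ℕ) (n+2) with h | h
      · exact Or.inl (Fin.ext (by simp [h]))
      · rw [if_neg h] at hx
        refine Or.inr ⟨ret1 x, ?_, castSucc_ret1 x h⟩
        have h2 : Fin.castSucc (u (ret1 x)) = Fin.castSucc (ret1 x) := by
          rw [hx, castSucc_ret1 x h]
        exact Fin.castSucc_injective _ h2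
    · rintro (rfl | ⟨i, hi, rfl⟩)
      · rw [if_pos (Fin.val_last _)]
      · rw [if_neg (by simp; omega), ret1_castSucc, hi]
  rw [fixCount, fixCount, hset, card_insert_of_notMem, card_image_of_injective _ (Fin.castSucc_injective _)]
  simp only [mem_image, mem_filter]
  rintro ⟨i, _, h⟩
  have := congrArg Fin.val h
  simp only [Fin.val_last, Fin.coe_castSucc] at this
  omega

lemma fixCount_wtwo (j : Fin (n+2)) (u : Equiv.Perm (Fin (n+1))) :
    fixCount (wtwo j u) = fixCount u := by
  have hset : (univ.filter fun x : Fin (n+3) => wtwo j u x = x)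
      = (univ.filter fun i : Fin (n+1) => u i = i).image (emb j) := by
    ext x
    simp only [mem_filter, mem_univ, true_and, mem_image]
    simp only [wtwo_apply, gfun]
    constructor
    · intro hx
      rcases eq_or_ne (x : ℕ) (j : ℕ) with h1 | h1
      · rw [if_pos h1] at hx
        exfalso
        have := congrArg Fin.val hx
        simp [Fin.val_last] at this
        omega
      · rcases eq_or_ne (x : ℕ) (n+2) with h2 | h2
        · rw [if_neg h1, if_pos h2] at hx
          exfalso
          have := congrArg Fin.val hx
          simp at this
          omega
        · rw [if_neg h1, if_neg h2] at hx
          refine ⟨ret j x, ?_, ?_⟩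
          · apply emb_injective j
            rw [hx, emb_ret j x h1 h2]
          · exact emb_ret j x h1 h2
    · rintro ⟨i, hi, rfl⟩
      rw [if_neg (emb_ne j i), if_neg (by have := emb_lt j i; omega), ret_emb, hi]
  rw [fixCount, fixCount, hset, card_image_of_injective _ (emb_injective j)]

lemma card_between (j : Fin (n+2)) :
    (univ.filter fun a : Fin (n+3) => (j : ℕ) < (a : ℕ) ∧ (a : ℕ) < n + 2).card
      = n + 1 - (j : ℕ) := by
  have hc : n + 1 - (j : ℕ) = (Finset.Ioo (j : ℕ) (n + 2)).card := by
    rw [Nat.card_Ioo]; omega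
  rw [hc]
  apply Finset.card_bij (fun (a : Fin (n+3)) _ => (a : ℕ))
  · intro a ha
    simp only [mem_filter] at ha
    simp only [Finset.mem_Ioo]
    exact ha.2
  · intro a ha b hb hab
    exact Fin.val_injective hab
  · intro b hb
    simp only [Finset.mem_Ioo] at hb
    exact ⟨⟨b, by omega⟩, by simp only [mem_filter, mem_univ, true_and, Fin.val_mk]; omega, rfl⟩


lemma gfun_emb (j : Fin (n+2)) (u : Equiv.Perm (Fin (n+1))) (i : Fin (n+1)) :
    gfun j u (emb j i) = emb j (u i) := by
  rw [gfun, if_neg (emb_ne j i), if_neg (by have := emb_lt j i; omega), ret_emb]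

lemma gfun_last (j : Fin (n+2)) (u : Equiv.Perm (Fin (n+1))) :
    gfun j u (Fin.last (n+2)) = ⟨(j : ℕ), by omega⟩ := by
  rw [gfun, if_neg (by simp [Fin.val_last]; omega), if_pos (Fin.val_last _)]

lemma neatCount_wone (u : Equiv.Perm (Fin (n+2))) : neatCount (wone u) = neatCount u := by
  have hset : ((univ ×ˢ univ).filter fun pr : Fin (n+3) × Fin (n+3) =>
        pr.1 < pr.2 ∧ wone u pr.1 < pr.2 ∧ wone u pr.2 < pr.1)
      = ((univ ×ˢ univ).filter fun pr : Fin (n+2) × Fin (n+2) =>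
        pr.1 < pr.2 ∧ u pr.1 < pr.2 ∧ u pr.2 < pr.1).image
          (fun pr => (Fin.castSucc pr.1, Fin.castSucc pr.2)) := by
    ext ⟨a, b⟩
    simp only [mem_filter, mem_product, mem_univ, true_and, mem_image,
      Prod.mk.injEq, Prod.exists]
    simp only [wone_apply, gmid]
    constructor
    · rintro ⟨hab, h1, h2⟩
      have hb : (b : ℕ) ≠ n + 2 := by
        intro h
        rw [if_pos h, Fin.lt_def, Fin.val_last] at h2
        omega
      have ha : (a : ℕ) ≠ n + 2 := by
        rw [Fin.lt_def] at hab
        omega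
      rw [if_neg ha] at h1
      rw [if_neg hb] at h2
      have ha' : Fin.castSucc (ret1 a) = a := castSucc_ret1 a ha
      have hb' : Fin.castSucc (ret1 b) = b := castSucc_ret1 b hb
      refine ⟨ret1 a, ret1 b, ⟨?_, ?_, ?_⟩, ha', hb'⟩
      · rw [← ha', ← hb'] at hab
        exact (Fin.castSucc_lt_castSucc_iff).mp hab
      · rw [← hb'] at h1
        exact (Fin.castSucc_lt_castSucc_iff).mp h1
      · rw [← ha'] at h2
        exact (Fin.castSucc_lt_castSucc_iff).mp h2
    · rintro ⟨a', b', ⟨h1, h2, h3⟩, rfl, rfl⟩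
      have hna : ((Fin.castSucc a' : Fin (n+3)) : ℕ) ≠ n + 2 := by simp; omega
      have hnb : ((Fin.castSucc b' : Fin (n+3)) : ℕ) ≠ n + 2 := by simp; omega
      rw [if_neg hna, if_neg hnb, ret1_castSucc, ret1_castSucc]
      exact ⟨Fin.castSucc_lt_castSucc_iff.mpr h1, Fin.castSucc_lt_castSucc_iff.mpr h2,
        Fin.castSucc_lt_castSucc_iff.mpr h3⟩
  rw [neatCount, neatCount, hset, card_image_of_injective]
  intro pr1 pr2 h
  simp only [Prod.mk.injEq] at h
  exact Prod.ext (Fin.castSucc_injective _ h.1) (Fin.castSucc_injective _ h.2)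

lemma neatCount_wtwo (j : Fin (n+2)) (u : Equiv.Perm (Fin (n+1))) :
    neatCount (wtwo j u) = neatCount u + (n + 1 - (j : ℕ)) := by
  classical
  set S1 := ((univ ×ˢ univ).filter fun pr : Fin (n+1) × Fin (n+1) =>
      pr.1 < pr.2 ∧ u pr.1 < pr.2 ∧ u pr.2 < pr.1).image
        (fun pr => ((emb j pr.1 : Fin (n+3)), emb j pr.2)) with hS1
  set S2 := (univ.filter fun a : Fin (n+3) => (j : ℕ) < (a : ℕ) ∧ (a : ℕ) < n + 2).image
      (fun a => (a, Fin.last (n+2))) with hS2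
  have hset : ((univ ×ˢ univ).filter fun pr : Fin (n+3) × Fin (n+3) =>
        pr.1 < pr.2 ∧ wtwo j u pr.1 < pr.2 ∧ wtwo j u pr.2 < pr.1) = S1 ∪ S2 := by
    ext ⟨a, b⟩
    simp only [hS1, hS2, mem_filter, mem_product, mem_univ, true_and, mem_union, mem_image,
      Prod.mk.injEq, Prod.exists]
    simp only [wtwo_apply]
    constructor
    · rintro ⟨hab, h1, h2⟩
      rcases eq_or_ne (b : ℕ) (n + 2) with hb | hb
      · right
        have hbl : b = Fin.last (n+2) := Fin.ext (by simpa using hb)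
        subst hbl
        rw [gfun_last] at h2
        rw [Fin.lt_def, Fin.val_mk] at h2
        rw [Fin.lt_def, Fin.val_last] at hab
        exact ⟨a, ⟨h2, hab⟩, rfl, rfl⟩
      · left
        have hbj : (b : ℕ) ≠ (j : ℕ) := by
          intro h
          rw [gfun, if_pos h, Fin.lt_def, Fin.val_last] at h2
          omega
        have haj : (a : ℕ) ≠ (j : ℕ) := by
          intro h
          rw [gfun, if_pos h, Fin.lt_def, Fin.val_last] at h1
          rw [Fin.lt_def] at hab
          omega
        have ha2 : (a : ℕ) ≠ n + 2 := by
          rw [Fin.lt_def] at hab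
          omega
        have hea : emb j (ret j a) = a := emb_ret j a haj ha2
        have heb : emb j (ret j b) = b := emb_ret j b hbj hb
        rw [← hea, gfun_emb] at h1
        rw [← heb, gfun_emb] at h2
        rw [← hea, ← heb] at hab
        refine ⟨ret j a, ret j b, ⟨(emb_lt_emb_iff j).mp hab, ?_, ?_⟩, hea, heb⟩
        · rw [← heb] at h1
          exact (emb_lt_emb_iff j).mp h1
        · rw [← hea] at h2
          exact (emb_lt_emb_iff j).mp h2
    · rintro (⟨a', b', ⟨h1, h2, h3⟩, rfl, rfl⟩ | ⟨a, ⟨haj, ha2⟩, rfl, rfl⟩)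
      · rw [gfun_emb, gfun_emb]
        exact ⟨(emb_lt_emb_iff j).mpr h1, (emb_lt_emb_iff j).mpr h2, (emb_lt_emb_iff j).mpr h3⟩
      · have haL : a < Fin.last (n+2) := by
          rw [Fin.lt_def, Fin.val_last]; omega
        refine ⟨haL, ?_, ?_⟩
        · rw [gfun, if_neg (by omega : ¬ (a:ℕ) = (j:ℕ)), if_neg (by omega : ¬ (a:ℕ) = n+2), Fin.lt_def, Fin.val_last]
          exact emb_lt j _
        · rw [gfun_last, Fin.lt_def, Fin.val_mk]
          exact haj
  have hdisj : Disjoint S1 S2 := by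
    rw [Finset.disjoint_left]
    rintro ⟨a, b⟩ hmem1 hmem2
    simp only [hS1, mem_image, Prod.mk.injEq, Prod.exists] at hmem1
    simp only [hS2, mem_image, Prod.mk.injEq] at hmem2
    obtain ⟨a', b', _, _, hb⟩ := hmem1
    obtain ⟨c, _, _, hb2⟩ := hmem2
    rw [← hb2] at hb
    have := emb_lt j b'
    have := congrArg Fin.val hb
    simp only [Fin.val_last] at this
    omega
  rw [neatCount, neatCount, hset, card_union_of_disjoint hdisj]
  congr 1
  · rw [card_image_of_injective]
    intro pr1 pr2 h
    simp only [Prod.mk.injEq] at h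
    exact Prod.ext (emb_injective j h.1) (emb_injective j h.2)
  · rw [card_image_of_injective, card_between]
    intro a1 a2 h
    simpa using congrArg Prod.fst h


lemma mul_self_apply {m : ℕ} {w : Equiv.Perm (Fin m)} (hw : w * w = 1) (x : Fin m) :
    w (w x) = x := by
  have := Equiv.ext_iff.mp hw x
  simpa using this

lemma filter_fix_last :
    ((Finset.univ.filter fun w : Equiv.Perm (Fin (n+3)) => w * w = 1).filter
        fun w => w (Fin.last (n+2)) = Fin.last (n+2))
      = (Finset.univ.filter fun u : Equiv.Perm (Fin (n+2)) => u * u = 1).image wone := by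
  ext w
  simp only [mem_filter, mem_univ, true_and, mem_image]
  constructor
  · rintro ⟨hw, hl⟩
    have hww := mul_self_apply hw
    have hne : ∀ i : Fin (n+2), (w (Fin.castSucc i) : ℕ) ≠ n + 2 := by
      intro i h
      have h1 : w (Fin.castSucc i) = Fin.last (n+2) := Fin.ext (by simpa using h)
      have h2 := congrArg w h1
      rw [hww, hl] at h2
      have := congrArg Fin.val h2
      simp only [Fin.coe_castSucc, Fin.val_last] at this
      omega
    set v : Fin (n+2) → Fin (n+2) := fun i => ret1 (w (Fin.castSucc i)) with hv
    have hvv : ∀ i, v (v i) = i := by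
      intro i
      simp only [hv]
      rw [castSucc_ret1 _ (hne i), hww, ret1_castSucc]
    refine ⟨⟨v, v, hvv, hvv⟩, Equiv.ext hvv, ?_⟩
    apply Equiv.ext; intro x
    rw [wone_apply, gmid]
    rcases eq_or_ne (x : ℕ) (n+2) with h | h
    · rw [if_pos h]
      have hx : x = Fin.last (n+2) := Fin.ext (by simpa using h)
      rw [hx, hl]
    · rw [if_neg h]
      show Fin.castSucc (v (ret1 x)) = w x
      have hwx : (w x : ℕ) ≠ n + 2 := by
        intro hc
        have h1 : w x = Fin.last (n+2) := Fin.ext (by simpa using hc)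
        have h2 := congrArg w h1
        rw [hww, hl] at h2
        exact h (by rw [h2]; simp)
      simp only [hv]
      rw [castSucc_ret1 _ h, castSucc_ret1 _ hwx]
  · rintro ⟨u, hu, rfl⟩
    exact ⟨wone_invol hu, by rw [wone_apply, gmid, if_pos (Fin.val_last _)]⟩

lemma filter_move_last :
    ((Finset.univ.filter fun w : Equiv.Perm (Fin (n+3)) => w * w = 1).filter
        fun w => w (Fin.last (n+2)) ≠ Fin.last (n+2))
      = (((Finset.univ : Finset (Fin (n+2))) ×ˢ
          (Finset.univ.filter fun u : Equiv.Perm (Fin (n+1)) => u * u = 1)).image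
          fun ju => wtwo ju.1 ju.2) := by
  ext w
  simp only [mem_filter, mem_univ, true_and, mem_image, mem_product, Prod.exists]
  constructor
  · rintro ⟨hw, hl⟩
    have hww := mul_self_apply hw
    have hlval : (w (Fin.last (n+2)) : ℕ) < n + 2 := by
      have h1 : (w (Fin.last (n+2)) : ℕ) < n + 3 := (w (Fin.last (n+2))).isLt
      have h2 : (w (Fin.last (n+2)) : ℕ) ≠ n + 2 := by
        intro h
        exact hl (Fin.ext (by simpa using h))
      omega
    set j : Fin (n+2) := ⟨(w (Fin.last (n+2)) : ℕ), hlval⟩ with hj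
    have hwj : w ⟨(j : ℕ), by omega⟩ = Fin.last (n+2) := by
      have : (⟨(j : ℕ), by omega⟩ : Fin (n+3)) = w (Fin.last (n+2)) := Fin.ext rfl
      rw [this, hww]
    have hne1 : ∀ i : Fin (n+1), (w (emb j i) : ℕ) ≠ (j : ℕ) := by
      intro i h
      have h1 : w (emb j i) = w (Fin.last (n+2)) := Fin.ext (by simpa using h)
      have h2 := w.injective h1
      have := emb_lt j i
      have := congrArg Fin.val h2
      simp only [Fin.val_last] at this
      omega
    have hne2 : ∀ i : Fin (n+1), (w (emb j i) : ℕ) ≠ n + 2 := by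
      intro i h
      have h1 : w (emb j i) = Fin.last (n+2) := Fin.ext (by simpa using h)
      have h2 := congrArg w h1
      rw [hww] at h2
      have := emb_ne j i
      have := congrArg Fin.val h2
      have hjv : (j : ℕ) = (w (Fin.last (n+2)) : ℕ) := rfl
      omega
    set v : Fin (n+1) → Fin (n+1) := fun i => ret j (w (emb j i)) with hv
    have hvv : ∀ i, v (v i) = i := by
      intro i
      simp only [hv]
      rw [emb_ret _ _ (hne1 i) (hne2 i), hww, ret_emb]
    refine ⟨j, ⟨v, v, hvv, hvv⟩, Equiv.ext hvv, ?_⟩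
    apply Equiv.ext; intro x
    rw [wtwo_apply, gfun]
    rcases eq_or_ne (x : ℕ) (j : ℕ) with h1 | h1
    · rw [if_pos h1]
      have hx : x = ⟨(j : ℕ), by omega⟩ := Fin.ext h1
      rw [hx, hwj]
    · rcases eq_or_ne (x : ℕ) (n + 2) with h2 | h2
      · rw [if_neg h1, if_pos h2]
        have hx : x = Fin.last (n+2) := Fin.ext (by simpa using h2)
        rw [hx]
      · rw [if_neg h1, if_neg h2]
        show emb j (v (ret j x)) = w x
        simp only [hv]
        rw [emb_ret _ _ h1 h2]
        have hwx1 : (w x : ℕ) ≠ (j : ℕ) := by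
          intro h
          have hx1 : w x = w (Fin.last (n+2)) := Fin.ext (by simpa using h)
          have := congrArg Fin.val (w.injective hx1)
          simp only [Fin.val_last] at this
          omega
        have hwx2 : (w x : ℕ) ≠ n + 2 := by
          intro h
          have hx1 : w x = Fin.last (n+2) := Fin.ext (by simpa using h)
          have h2' := congrArg w hx1
          rw [hww] at h2'
          have := congrArg Fin.val h2'
          exact h1 (by rw [this])
        rw [emb_ret _ _ hwx1 hwx2]
  · rintro ⟨j, u, hu, rfl⟩
    refine ⟨wtwo_invol j hu, ?_⟩
    rw [wtwo_apply, gfun_last]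
    intro h
    have := congrArg Fin.val h
    simp only [Fin.val_mk, Fin.val_last] at this
    omega


lemma wone_injective : Function.Injective (wone (n := n)) := by
  intro u u' h
  apply Equiv.ext; intro i
  have h1 := Equiv.ext_iff.mp h (Fin.castSucc i)
  rw [wone_apply, wone_apply, gmid, gmid,
    if_neg (show ¬ ((Fin.castSucc i : Fin (n+3)) : ℕ) = n + 2 by simp only [Fin.coe_castSucc]; omega),
    if_neg (show ¬ ((Fin.castSucc i : Fin (n+3)) : ℕ) = n + 2 by simp only [Fin.coe_castSucc]; omega),
    ret1_castSucc] at h1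
  exact Fin.castSucc_injective _ h1

lemma wtwo_inj {j j' : Fin (n+2)} {u u' : Equiv.Perm (Fin (n+1))}
    (h : wtwo j u = wtwo j' u') : j = j' ∧ u = u' := by
  have hL := Equiv.ext_iff.mp h (Fin.last (n+2))
  rw [wtwo_apply, wtwo_apply, gfun_last, gfun_last] at hL
  have hj : j = j' := Fin.ext (by simpa using congrArg Fin.val hL)
  subst hj
  refine ⟨rfl, ?_⟩
  apply Equiv.ext; intro i
  have hi := Equiv.ext_iff.mp h (emb j i)
  rw [wtwo_apply, wtwo_apply, gfun_emb, gfun_emb] at hi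
  exact emb_injective j hi

lemma sum_one (p q : ℂ) :
    (∑ w ∈ (Finset.univ.filter fun w : Equiv.Perm (Fin (n+3)) => w * w = 1).filter
        (fun w => w (Fin.last (n+2)) = Fin.last (n+2)),
      (p * (1 - q)) ^ ((n + 3 - fixCount w) / 2) * (1 - p) ^ fixCount w * q ^ neatCount w)
      = (1 - p) * f (n+2) p q := by
  rw [filter_fix_last, Finset.sum_image (fun x _ y _ hxy => wone_injective hxy), f,
    Finset.mul_sum]
  apply Finset.sum_congr rfl
  intro u hu
  rw [fixCount_wone, neatCount_wone]
  have h1 : (n + 3 - (fixCount u + 1)) / 2 = (n + 2 - fixCount u) / 2 := by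
    have := fixCount_le u; omega
  rw [h1, pow_succ]
  ring

lemma sum_two (p q : ℂ) :
    (∑ w ∈ (Finset.univ.filter fun w : Equiv.Perm (Fin (n+3)) => w * w = 1).filter
        (fun w => ¬ w (Fin.last (n+2)) = Fin.last (n+2)),
      (p * (1 - q)) ^ ((n + 3 - fixCount w) / 2) * (1 - p) ^ fixCount w * q ^ neatCount w)
      = p * (1 - q ^ (n+2)) * f (n+1) p q := by
  have hfil := filter_move_last (n := n)
  simp only [ne_eq] at hfil
  rw [hfil, Finset.sum_image (by
    rintro ⟨j, u⟩ _ ⟨j', u'⟩ _ hxy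
    obtain ⟨h1, h2⟩ := wtwo_inj hxy
    simp only [Prod.mk.injEq]
    exact ⟨h1, h2⟩)]
  rw [Finset.sum_product]
  have hterm : ∀ (j : Fin (n+2)) (u : Equiv.Perm (Fin (n+1))),
      (p * (1 - q)) ^ ((n + 3 - fixCount (wtwo j u)) / 2) * (1 - p) ^ fixCount (wtwo j u)
        * q ^ neatCount (wtwo j u)
      = (p * (1 - q)) * q ^ (n + 1 - (j : ℕ)) *
        ((p * (1 - q)) ^ ((n + 1 - fixCount u) / 2) * (1 - p) ^ fixCount u * q ^ neatCount u) := by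
    intro j u
    rw [fixCount_wtwo, neatCount_wtwo]
    have h1 : (n + 3 - fixCount u) / 2 = (n + 1 - fixCount u) / 2 + 1 := by
      have := fixCount_le u; omega
    rw [h1, pow_succ, pow_add]
    ring
  have hinner : ∀ j : Fin (n+2),
      (∑ u ∈ Finset.univ.filter fun u : Equiv.Perm (Fin (n+1)) => u * u = 1,
        (p * (1 - q)) ^ ((n + 3 - fixCount (wtwo j u)) / 2) * (1 - p) ^ fixCount (wtwo j u)
          * q ^ neatCount (wtwo j u))
      = (p * (1 - q)) * q ^ (n + 1 - (j : ℕ)) * f (n+1) p q := by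
    intro j
    rw [f, Finset.mul_sum]
    exact Finset.sum_congr rfl fun u _ => hterm j u
  rw [Finset.sum_congr rfl fun j _ => hinner j]
  rw [← Finset.sum_mul, ← Finset.mul_sum]
  have hs : (∑ j : Fin (n+2), q ^ (n + 1 - (j : ℕ))) = ∑ t ∈ Finset.range (n+2), q ^ t := by
    rw [Fin.sum_univ_eq_sum_range (fun t => q ^ (n + 1 - t)) (n+2),
      ← Finset.sum_range_reflect (fun t => q ^ t) (n+2)]
    apply Finset.sum_congr rfl
    intro t ht
    simp only [Finset.mem_range] at ht
    congr 1
  rw [hs]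
  have hgeom : (1 - q) * ∑ t ∈ Finset.range (n+2), q ^ t = 1 - q ^ (n+2) := by
    have := geom_sum_mul q (n+2)
    linear_combination -this
  calc (p * (1 - q) * ∑ t ∈ Finset.range (n+2), q ^ t) * f (n+1) p q
      = p * ((1 - q) * ∑ t ∈ Finset.range (n+2), q ^ t) * f (n+1) p q := by ring
    _ = p * (1 - q ^ (n+2)) * f (n+1) p q := by rw [hgeom]

lemma f_rec (p q : ℂ) :
    f (n+3) p q = (1 - p) * f (n+2) p q + p * (1 - q ^ (n+2)) * f (n+1) p q := by
  rw [f, ← Finset.sum_filter_add_sum_filter_not _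
    (fun w : Equiv.Perm (Fin (n+3)) => w (Fin.last (n+2)) = Fin.last (n+2)),
    sum_one, sum_two]


/-! ### Gaussian binomial coefficients -/

/-- Gaussian binomial coefficients, via the `q`-Pascal rule. -/
noncomputable def qb (q : ℂ) : ℕ → ℕ → ℂ
  | _, 0 => 1
  | 0, _ + 1 => 0
  | n + 1, i + 1 => q ^ (i + 1) * qb q n (i + 1) + qb q n i

@[simp] lemma qb_zero (q : ℂ) (n : ℕ) : qb q n 0 = 1 := by cases n <;> rfl

lemma qb_succ (q : ℂ) (n i : ℕ) :
    qb q (n+1) (i+1) = q ^ (i+1) * qb q n (i+1) + qb q n i := rfl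

lemma qb_eq_zero (q : ℂ) : ∀ n i, n < i → qb q n i = 0 := by
  intro n
  induction n with
  | zero =>
    intro i h
    match i with
    | i' + 1 => rfl
  | succ m ih =>
    intro i h
    match i with
    | i' + 1 =>
      rw [qb_succ, ih _ (by omega), ih _ (by omega)]
      ring

lemma qb_diag (q : ℂ) : ∀ n, qb q n n = 1 := by
  intro n
  induction n with
  | zero => rfl
  | succ m ih => rw [qb_succ, qb_eq_zero q m (m+1) (by omega), ih]; ring

lemma qb_prod (q : ℂ) : ∀ n i, i ≤ n →
    (∏ t ∈ Finset.range i, (1 - q ^ (t+1))) * qb q n i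
      = ∏ t ∈ Finset.range i, (1 - q ^ (n - t)) := by
  intro n
  induction n with
  | zero =>
    intro i h
    interval_cases i
    simp
  | succ m ih =>
    intro i h
    match i with
    | 0 => simp
    | i' + 1 =>
      rw [qb_succ]
      have hR : (∏ t ∈ Finset.range (i'+1), (1 - q ^ (m + 1 - t)))
          = (∏ t ∈ Finset.range i', (1 - q ^ (m - t))) * (1 - q ^ (m+1)) := by
        rw [Finset.prod_range_succ']
        have h0 : m + 1 - 0 = m + 1 := rfl
        rw [h0]
        congr 1
        apply Finset.prod_congr rfl
        intro t _
        congr 2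
        omega
      rcases Nat.lt_or_ge i' m with hi | hi
      · have e1 := ih (i'+1) (by omega)
        have e2 := ih i' (by omega)
        rw [Finset.prod_range_succ, Finset.prod_range_succ] at e1
        rw [Finset.prod_range_succ (fun t => 1 - q ^ (t+1)) i']
        rw [hR]
        have hq : q ^ (i'+1) * q ^ (m - i') = q ^ (m+1) := by
          rw [← pow_add]
          congr 1
          omega
        set A := ∏ t ∈ Finset.range i', (1 - q ^ (m - t)) with hA
        set B := ∏ t ∈ Finset.range i', (1 - q ^ (t+1)) with hB
        linear_combination (q ^ (i'+1)) * e1 + (1 - q ^ (i'+1)) * e2 - A * hq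
      · have him : i' = m := by omega
        subst him
        rw [qb_eq_zero q i' (i'+1) (by omega), qb_diag]
        have hrefl : (∏ t ∈ Finset.range (i'+1), (1 - q ^ (i' + 1 - t)))
            = ∏ t ∈ Finset.range (i'+1), (1 - q ^ (t+1)) := by
          rw [← Finset.prod_range_reflect (fun t => 1 - q ^ (t+1)) (i'+1)]
          apply Finset.prod_congr rfl
          intro t ht
          simp only [Finset.mem_range] at ht
          congr 2
          omega
        rw [hrefl]
        ring


lemma one_sub_pow_ne {k : ℕ} {q : ℂ} (hq : IsPrimitiveRoot q k) {l : ℕ} (h0 : 0 < l)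
    (hl : l < k) : 1 - q ^ l ≠ 0 := by
  intro h
  exact hq.pow_ne_one_of_pos_of_lt h0.ne' hl (by linear_combination -h)

lemma prodP_ne {k : ℕ} {q : ℂ} (hq : IsPrimitiveRoot q k) {i : ℕ} (hi : i < k) :
    (∏ t ∈ Finset.range i, (1 - q ^ (t+1))) ≠ 0 := by
  rw [Finset.prod_ne_zero_iff]
  intro t ht
  simp only [Finset.mem_range] at ht
  exact one_sub_pow_ne hq (by omega) (by omega)

lemma qbid {k : ℕ} {q : ℂ} (hq : IsPrimitiveRoot q k) (n i : ℕ) (hnk : n + 2 ≤ k) :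
    qb q (n+2) (i+1)
      = qb q (n+1) (i+1) + qb q (n+1) i - (1 - q ^ (n+1)) * qb q n i := by
  rcases Nat.lt_or_ge (n+1) i with hbig | hle
  · rw [qb_eq_zero q (n+2) (i+1) (by omega), qb_eq_zero q (n+1) (i+1) (by omega),
      qb_eq_zero q (n+1) i (by omega), qb_eq_zero q n i (by omega)]
    ring
  · rcases eq_or_lt_of_le hle with heq | hlt
    · subst heq
      show qb q (n+2) (n+2) = qb q (n+1) (n+2) + qb q (n+1) (n+1) - (1 - q ^ (n+1)) * qb q n (n+1)
      rw [qb_diag, qb_eq_zero q (n+1) (n+2) (by omega), qb_diag, qb_eq_zero q n (n+1) (by omega)]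
      ring
    · have hi : i ≤ n := by omega
      have e_main := qb_prod q (n+2) (i+1) (by omega)
      have e_a := qb_prod q (n+1) (i+1) (by omega)
      have e_b := qb_prod q (n+1) i (by omega)
      have e_c := qb_prod q n i (by omega)
      set A := ∏ t ∈ Finset.range i, (1 - q ^ (n + 1 - t)) with hA
      set C := ∏ t ∈ Finset.range i, (1 - q ^ (n - t)) with hC
      set B := ∏ t ∈ Finset.range i, (1 - q ^ (t+1)) with hB
      have hm : (∏ t ∈ Finset.range (i+1), (1 - q ^ (n+2-t))) = (1 - q ^ (n+2)) * A := by
        rw [Finset.prod_range_succ', (rfl : n + 2 - 0 = n + 2), mul_comm]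
        congr 1
        apply Finset.prod_congr rfl
        intro t _
        congr 2
        omega
      have ha : (∏ t ∈ Finset.range (i+1), (1 - q ^ (n+1-t))) = A * (1 - q ^ (n+1-i)) :=
        Finset.prod_range_succ _ _
      have hrel : (1 - q ^ (n+1-i)) * A = (1 - q ^ (n+1)) * C := by
      
        have h1 : (1 - q ^ (n+1-i)) * A = ∏ t ∈ Finset.range (i+1), (1 - q ^ (n+1-t)) := by
          rw [ha]; ring
        have h2 : (∏ t ∈ Finset.range (i+1), (1 - q ^ (n+1-t))) = (1 - q ^ (n+1)) * C := by
          rw [Finset.prod_range_succ', (rfl : n + 1 - 0 = n + 1), mul_comm]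
          congr 1
          apply Finset.prod_congr rfl
          intro t _
          congr 2
          omega
        rw [h1, h2]
      have hP : (∏ t ∈ Finset.range (i+1), (1 - q ^ (t+1))) = B * (1 - q ^ (i+1)) :=
        Finset.prod_range_succ _ _
      rw [hP, hm] at e_main
      rw [hP, ha] at e_a
      have hpow : q ^ (i+1) * q ^ (n+1-i) = q ^ (n+2) := by
        rw [← pow_add]
        congr 1
        omega
      have hBne : B ≠ 0 := prodP_ne hq (by omega)
      have h1ne : (1 - q ^ (i+1)) ≠ 0 := one_sub_pow_ne hq (by omega) (by omega)
      have key : (B * (1 - q ^ (i+1))) * qb q (n+2) (i+1)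
          = (B * (1 - q ^ (i+1))) * (qb q (n+1) (i+1) + qb q (n+1) i
            - (1 - q ^ (n+1)) * qb q n i) := by
        linear_combination e_main - e_a - (1 - q ^ (i+1)) * e_b
          + ((1 - q ^ (n+1)) * (1 - q ^ (i+1))) * e_c - (1 - q ^ (i+1)) * hrel + A * hpow
      exact mul_left_cancel₀ (mul_ne_zero hBne h1ne) key

/-- `g p q n = Σ_i (-p)^i [n choose i]_q`. -/
noncomputable def g (p q : ℂ) (n : ℕ) : ℂ :=
  ∑ i ∈ Finset.range (n+1), (-p) ^ i * qb q n i

lemma g_rec {k : ℕ} {q : ℂ} (hq : IsPrimitiveRoot q k) (p : ℂ) (n : ℕ) (hnk : n + 3 ≤ k) :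
    g p q (n+3) = (1 - p) * g p q (n+2) + p * (1 - q ^ (n+2)) * g p q (n+1) := by
  have hsplit : g p q (n+3)
      = (∑ i ∈ Finset.range (n+3), (-p) ^ (i+1) * qb q (n+3) (i+1)) + 1 := by
    rw [g, Finset.sum_range_succ']
    simp
  have hqbid : ∀ i, qb q (n+3) (i+1)
      = qb q (n+2) (i+1) + qb q (n+2) i - (1 - q ^ (n+2)) * qb q (n+1) i :=
    fun i => qbid hq (n+1) i (by omega)
  have hT : (∑ i ∈ Finset.range (n+3), (-p) ^ (i+1) * qb q (n+3) (i+1))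
      = (∑ i ∈ Finset.range (n+3), (-p) ^ (i+1) * qb q (n+2) (i+1))
        + (∑ i ∈ Finset.range (n+3), (-p) ^ (i+1) * qb q (n+2) i)
        - (1 - q ^ (n+2)) * ∑ i ∈ Finset.range (n+3), (-p) ^ (i+1) * qb q (n+1) i := by
    rw [Finset.mul_sum, ← Finset.sum_add_distrib, ← Finset.sum_sub_distrib]
    apply Finset.sum_congr rfl
    intro i _
    rw [hqbid i]
    ring
  have hT1 : (∑ i ∈ Finset.range (n+3), (-p) ^ (i+1) * qb q (n+2) (i+1))
      = g p q (n+2) - 1 := by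
    have hg : g p q (n+2) = (∑ i ∈ Finset.range (n+2), (-p) ^ (i+1) * qb q (n+2) (i+1)) + 1 := by
      rw [g, Finset.sum_range_succ']
      simp
    rw [hg, Finset.sum_range_succ, qb_eq_zero q (n+2) (n+3) (by omega)]
    simp
  have hT2 : (∑ i ∈ Finset.range (n+3), (-p) ^ (i+1) * qb q (n+2) i)
      = -p * g p q (n+2) := by
    rw [g, Finset.mul_sum]
    apply Finset.sum_congr rfl
    intro i _
    rw [pow_succ]
    ring
  have hT3 : (∑ i ∈ Finset.range (n+3), (-p) ^ (i+1) * qb q (n+1) i)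
      = -p * g p q (n+1) := by
    rw [Finset.sum_range_succ, qb_eq_zero q (n+1) (n+2) (by omega), g, Finset.mul_sum]
    rw [Finset.sum_congr rfl (fun i (_ : i ∈ Finset.range (n+2)) => by
      rw [pow_succ] : ∀ i ∈ Finset.range (n+2), (-p) ^ (i+1) * qb q (n+1) i
        = ((-p) ^ i * -p) * qb q (n+1) i)]
    simp only [mul_zero, add_zero]
    apply Finset.sum_congr rfl
    intro i _
    ring
  rw [hsplit, hT, hT1, hT2, hT3]
  ring


/-! ### base cases -/

lemma f_zero (p q : ℂ) : f 0 p q = 1 := by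
  rw [f, Finset.filter_true_of_mem (fun w _ => Equiv.ext fun i => i.elim0)]
  rw [← (by decide : ({1} : Finset (Equiv.Perm (Fin 0))) = Finset.univ), Finset.sum_singleton]
  rw [(by decide : fixCount (1 : Equiv.Perm (Fin 0)) = 0),
    (by decide : neatCount (1 : Equiv.Perm (Fin 0)) = 0)]
  norm_num

lemma f_one (p q : ℂ) : f 1 p q = 1 - p := by
  rw [f, Finset.filter_true_of_mem (fun w _ => Equiv.ext fun i => Subsingleton.elim _ _)]
  rw [← (by decide : ({1} : Finset (Equiv.Perm (Fin 1))) = Finset.univ), Finset.sum_singleton]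
  rw [(by decide : fixCount (1 : Equiv.Perm (Fin 1)) = 1),
    (by decide : neatCount (1 : Equiv.Perm (Fin 1)) = 0)]
  norm_num

lemma f_two (p q : ℂ) : f 2 p q = (1 - p) ^ 2 + p * (1 - q) := by
  rw [f, Finset.filter_true_of_mem (fun w _ => by revert w; decide)]
  rw [← (by decide : ({1, Equiv.swap 0 1} : Finset (Equiv.Perm (Fin 2))) = Finset.univ)]
  rw [Finset.sum_pair (by decide : (1 : Equiv.Perm (Fin 2)) ≠ Equiv.swap 0 1)]
  rw [(by decide : fixCount (1 : Equiv.Perm (Fin 2)) = 2),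
    (by decide : fixCount (Equiv.swap 0 1 : Equiv.Perm (Fin 2)) = 0),
    (by decide : neatCount (1 : Equiv.Perm (Fin 2)) = 0),
    (by decide : neatCount (Equiv.swap 0 1 : Equiv.Perm (Fin 2)) = 0)]
  norm_num

lemma g_zero (p q : ℂ) : g p q 0 = 1 := by
  rw [g]
  simp [qb_zero]

lemma g_one (p q : ℂ) : g p q 1 = 1 - p := by
  rw [g, Finset.sum_range_succ, Finset.sum_range_one, qb_zero, qb_diag]
  ring

lemma g_two (p q : ℂ) : g p q 2 = (1 - p) ^ 2 + p * (1 - q) := by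
  rw [g, Finset.sum_range_succ, Finset.sum_range_succ, Finset.sum_range_one, qb_zero,
    (by rw [qb_succ, qb_diag, qb_zero] : qb q 2 1 = q ^ 1 * 1 + 1),
    (show qb q 2 2 = 1 from qb_diag q 2)]
  ring

lemma f_eq_g {k : ℕ} {q : ℂ} (hq : IsPrimitiveRoot q k) (p : ℂ) :
    ∀ m, m ≤ k → f m p q = g p q m := by
  intro m
  induction m using Nat.strong_induction_on with
  | _ m ih =>
    match m with
    | 0 => exact fun _ => by rw [f_zero, g_zero]
    | 1 => exact fun _ => by rw [f_one, g_one]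
    | 2 => exact fun _ => by rw [f_two, g_two]
    | n + 3 =>
      intro hm
      rw [f_rec, g_rec hq p n hm, ih (n+2) (by omega) (by omega), ih (n+1) (by omega) (by omega)]


/-- `f_k(p, q) = 1 + (-p)^k` when `q` is a primitive `k`-th root of unity. -/
theorem f_eq_one_add_neg_p_pow (k : ℕ) (hk : 2 ≤ k) (p q : ℂ) (hq : IsPrimitiveRoot q k) :
    f k p q = 1 + (-p) ^ k := by
  rw [f_eq_g hq p k le_rfl, g, Finset.sum_range_succ, qb_diag]
  have hmid : ∀ i ∈ Finset.range k, (-p) ^ i * qb q k i = if i = 0 then 1 else 0 := by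
    intro i hi
    simp only [Finset.mem_range] at hi
    rcases Nat.eq_zero_or_pos i with rfl | hpos
    · simp
    · rw [if_neg (by omega)]
      have hprod := qb_prod q k i (by omega)
      have hzero : (∏ t ∈ Finset.range i, (1 - q ^ (k - t))) = 0 := by
        apply Finset.prod_eq_zero (Finset.mem_range.mpr hpos)
        rw [Nat.sub_zero, hq.pow_eq_one]
        ring
      have hne : (∏ t ∈ Finset.range i, (1 - q ^ (t+1))) ≠ 0 := prodP_ne hq hi
      have hqb : qb q k i = 0 :=
        (mul_eq_zero.mp (hprod.trans hzero)).resolve_left hne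
      rw [hqb]
      ring
  rw [Finset.sum_congr rfl hmid, Finset.sum_ite_eq' (Finset.range k) 0 (fun _ => (1 : ℂ)),
    if_pos (Finset.mem_range.mpr (by omega))]
  ring



end PaperF
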